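/- Under Assumption (A1), let x₀ ∈ ℝ and for δ > 0 let x^δ : [0,∞) → ℝ satisfy x^δ(t) = x₀ + ∫₀ᵗ (f(x^δ(s)) + κ(x^δ(π_δ(s)))) ds for all t ≥ 0. Then for every integer p ≥ 1 there exists a constant C > 0, independent of t and δ, such that |x^δ(π_δ(t)) − x^δ(t)|^p ≤ C·δ^p for all t ≥ 0 and all δ > 0. -/

import Mathlib

/-- The sampling map `π_δ(t) = δ·⌊t/δ⌋`. -/
noncomputable def piD (δ t : ℝ) : ℝ := δ * (⌊t / δ⌋ : ℤ)

open MeasureTheory Set intervalIntegral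

/-- One-sided a priori bound for trajectories of `x' = f(x) + u` with dissipative `f`
and bounded input `u`. -/
lemma aux_upper (f u x : ℝ → ℝ) (x₀ lam γ : ℝ) (hlam : 0 < lam) (hγ : 0 < γ)
    (hcontr : ∀ a : ℝ, a * (f a - f 0) ≤ -lam * a ^ 2)
    (hubd : ∀ s : ℝ, |u s| ≤ γ)
    (hx : ∀ t, 0 ≤ t → x t = x₀ + ∫ s in (0:ℝ)..t, (f (x s) + u s))
    (t : ℝ) (ht : 0 ≤ t)
    (hint : IntervalIntegrable (fun s => f (x s) + u s) volume 0 t) :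
    x t ≤ max |x₀| ((|f 0| + γ) / lam) := by
  set g : ℝ → ℝ := fun s => f (x s) + u s with hg
  set R : ℝ := (|f 0| + γ) / lam with hR
  set B : ℝ := max |x₀| R with hBdef
  have hRpos : 0 < R := div_pos (by positivity) hlam
  by_contra hc
  push_neg at hc
  have hIcc : IntegrableOn g (Set.uIcc 0 t) volume := by
    rw [Set.uIcc_of_le ht]
    exact (intervalIntegrable_iff_integrableOn_Icc_of_le ht).mp hint
  have hcontF : ContinuousOn (fun r => x₀ + ∫ s in (0:ℝ)..r, g s) (Set.Icc 0 t) := by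
    have h3 := intervalIntegral.continuousOn_primitive_interval hIcc
    rw [Set.uIcc_of_le ht] at h3
    exact continuousOn_const.add h3
  have hcx : ContinuousOn x (Set.Icc 0 t) :=
    hcontF.congr (fun s hs => hx s hs.1)
  set K := Set.Icc 0 t ∩ x ⁻¹' Set.Iic B with hK
  have hKcl : IsClosed K := hcx.preimage_isClosed_of_isClosed isClosed_Icc isClosed_Iic
  have hx0 : x 0 = x₀ := by simpa using hx 0 le_rfl
  have hx0B : x 0 ≤ B := by
    rw [hx0]
    exact le_trans (le_abs_self x₀) (le_max_left _ _)
  have h0K : (0:ℝ) ∈ K := ⟨⟨le_rfl, ht⟩, hx0B⟩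
  have hKbdd : BddAbove K := ⟨t, fun s hs => hs.1.2⟩
  set w := sSup K with hw
  have hwK : w ∈ K := hKcl.csSup_mem ⟨0, h0K⟩ hKbdd
  have hw0 : 0 ≤ w := hwK.1.1
  have hwt : w ≤ t := hwK.1.2
  have hxw : x w ≤ B := hwK.2
  have hwlt : w < t := hwt.lt_of_ne (fun h => absurd (h ▸ hxw) (not_le.mpr hc))
  have hstep : ∀ s ∈ Set.Ioc w t, B < x s := by
    intro s hs
    by_contra h
    push_neg at h
    have hsK : s ∈ K := ⟨⟨le_trans hw0 hs.1.le, hs.2⟩, h⟩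
    exact absurd (le_csSup hKbdd hsK) (not_le.mpr hs.1)
  have hgneg : ∀ s ∈ Set.Ioc w t, g s ≤ 0 := by
    intro s hs
    have hxs : R < x s := lt_of_le_of_lt (le_max_right _ _) (hstep s hs)
    have hxpos : 0 < x s := lt_trans hRpos hxs
    have h1 := hcontr (x s)
    have h2 : f (x s) ≤ f 0 - lam * x s := by nlinarith
    have habs : u s ≤ γ := le_trans (le_abs_self _) (hubd s)
    have hlamR : lam * R = |f 0| + γ := by
      rw [hR]; field_simp
    have hfb := le_abs_self (f 0)
    have hgs : g s = f (x s) + u s := rfl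
    rw [hgs]
    nlinarith [mul_lt_mul_of_pos_left hxs hlam]
  have hint' : IntervalIntegrable g volume w t := by
    apply hint.mono_set
    rw [Set.uIcc_of_le ht, Set.uIcc_of_le hwlt.le]
    exact Set.Icc_subset_Icc hw0 le_rfl
  have hint'' : IntervalIntegrable g volume 0 w := by
    apply hint.mono_set
    rw [Set.uIcc_of_le ht, Set.uIcc_of_le hw0]
    exact Set.Icc_subset_Icc le_rfl hwt
  have hInonpos : ∫ s in w..t, g s ≤ 0 := by
    have h0 : (0:ℝ) ≤ ∫ s in w..t, -g s := by
      apply intervalIntegral.integral_nonneg_of_ae_restrict hwlt.le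
      have hres : volume.restrict (Set.Icc w t) = volume.restrict (Set.Ioc w t) :=
        (Measure.restrict_congr_set Ioc_ae_eq_Icc).symm
      rw [Filter.EventuallyLE, hres]
      exact ae_restrict_of_forall_mem measurableSet_Ioc
        (fun s hs => neg_nonneg.mpr (hgneg s hs))
    rw [intervalIntegral.integral_neg] at h0
    linarith
  have hdiff : x t - x w = ∫ s in w..t, g s := by
    rw [hx t ht, hx w hw0]
    have h4 := integral_interval_sub_left (a := (0:ℝ)) (b := t) (c := w)
      (f := g) (μ := volume) hint hint''
    rw [← h4]; ring
  linarith

/-- Two-sided a priori bound. -/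
lemma aux_bound (f u x : ℝ → ℝ) (x₀ lam γ : ℝ) (hlam : 0 < lam) (hγ : 0 < γ)
    (hcontr : ∀ a b : ℝ, (a - b) * (f a - f b) ≤ -lam * (a - b) ^ 2)
    (hubd : ∀ s : ℝ, |u s| ≤ γ)
    (hx : ∀ t, 0 ≤ t → x t = x₀ + ∫ s in (0:ℝ)..t, (f (x s) + u s)) :
    ∀ t, 0 ≤ t → |x t| ≤ max |x₀| ((|f 0| + γ) / lam) := by
  intro t ht
  by_cases hint : IntervalIntegrable (fun s => f (x s) + u s) volume 0 t
  · rw [abs_le']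
    constructor
    · refine aux_upper f u x x₀ lam γ hlam hγ (fun a => ?_) hubd hx t ht hint
      have h := hcontr a 0
      simpa using h
    · -- apply the upper bound to the negated system
      have hfe : (fun s => (fun z => -f (-z)) ((fun r => -(x r)) s) + (fun r => -u r) s)
          = (fun s => -(f (x s) + u s)) := by
        funext s
        simp only [neg_neg]
        ring
      have hx' : ∀ r, 0 ≤ r → (fun r => -(x r)) r
          = -x₀ + ∫ s in (0:ℝ)..r, ((fun z => -f (-z)) ((fun r => -(x r)) s) + (fun r => -u r) s) := by
        intro r hr
        rw [hfe, intervalIntegral.integral_neg]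
        simp only
        rw [hx r hr]
        ring
      have hint' : IntervalIntegrable
          (fun s => (fun z => -f (-z)) ((fun r => -(x r)) s) + (fun r => -u r) s) volume 0 t := by
        rw [hfe]; exact hint.neg
      have hcontr' : ∀ a : ℝ, a * ((fun z => -f (-z)) a - (fun z => -f (-z)) 0) ≤ -lam * a ^ 2 := by
        intro a
        have h := hcontr (-a) 0
        simp only [sub_zero, neg_zero] at h ⊢
        nlinarith [h]
      have hubd' : ∀ s : ℝ, |(fun r => -u r) s| ≤ γ := by
        intro s; simp only [abs_neg]; exact hubd s
      have key := aux_upper (fun z => -f (-z)) (fun r => -u r) (fun r => -(x r)) (-x₀)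
        lam γ hlam hγ hcontr' hubd' hx' t ht hint'
      simp only [neg_zero, abs_neg] at key
      linarith
  · rw [hx t ht, intervalIntegral.integral_undef hint, add_zero]
    exact le_max_left _ _

/-- Under Assumption (A1), the increment of the sampled-data closed-loop
trajectory over a sampling interval satisfies `|x^δ(π_δ(t)) − x^δ(t)|^p ≤ C·δ^p`,
uniformly in `t ≥ 0` and `δ > 0`. -/
theorem stmt14
    (f κ : ℝ → ℝ) (x₀ : ℝ)
    -- Assumption (A1)
    (lam ξ μ Lκ γ : ℝ) (q : ℕ)
    (hlam : 0 < lam) (hξ : 0 < ξ) (hμ : 0 < μ) (hLκ : 0 < Lκ) (hγ : 0 < γ)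
    (hcontr : ∀ a b : ℝ, (a - b) * (f a - f b) ≤ -lam * (a - b) ^ 2)
    (hfLip : ∀ a b : ℝ, |f a - f b| ≤ (ξ * (|a| ^ q + |b| ^ q) + μ) * |a - b|)
    (hκLip : ∀ a b : ℝ, |κ a - κ b| ≤ Lκ * |a - b|)
    (hgap : lam / 2 - Lκ > 0)
    (hκbd : ∀ a : ℝ, |κ a| ≤ γ)
    -- the sampled-data closed-loop system
    (xd : ℝ → ℝ → ℝ)
    (hxd : ∀ δ : ℝ, 0 < δ → ∀ t : ℝ, 0 ≤ t →
      xd δ t = x₀ + ∫ s in (0:ℝ)..t, (f (xd δ s) + κ (xd δ (piD δ s))))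
    :
    ∀ p : ℕ, 1 ≤ p → ∃ C : ℝ, 0 < C ∧
      ∀ t : ℝ, 0 ≤ t → ∀ δ : ℝ, 0 < δ →
        |xd δ (piD δ t) - xd δ t| ^ p ≤ C * δ ^ p := by
  intro p hp
  set B : ℝ := max |x₀| ((|f 0| + γ) / lam) with hBdef
  have hB0 : 0 ≤ B := le_trans (abs_nonneg x₀) (le_max_left _ _)
  set M₁ : ℝ := (ξ * (B ^ q + 1) + μ) * B + |f 0| with hM₁def
  have hM₁0 : 0 ≤ M₁ := by positivity
  set M : ℝ := M₁ + γ with hMdef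
  have hM : 0 < M := by positivity
  refine ⟨M ^ p, pow_pos hM p, ?_⟩
  intro t ht δ hδ
  set x : ℝ → ℝ := xd δ with hxdef
  set g : ℝ → ℝ := fun s => f (x s) + κ (x (piD δ s)) with hgdef
  have hx : ∀ r, 0 ≤ r → x r = x₀ + ∫ s in (0:ℝ)..r, g s := hxd δ hδ
  -- a priori bound
  have hbd : ∀ s, 0 ≤ s → |x s| ≤ B :=
    aux_bound f (fun s => κ (x (piD δ s))) x x₀ lam γ hlam hγ hcontr
      (fun s => hκbd _) hx
  -- bound on f ∘ x and on g
  have hfb : ∀ s, 0 ≤ s → |f (x s)| ≤ M₁ := by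
    intro s hs
    have h1 := hfLip (x s) 0
    rw [abs_zero, sub_zero] at h1
    have hxsB : |x s| ≤ B := hbd s hs
    have hpow : |x s| ^ q ≤ B ^ q := pow_le_pow_left₀ (abs_nonneg _) hxsB q
    have h0q : (0:ℝ) ^ q ≤ 1 := pow_le_one₀ le_rfl zero_le_one
    have h2 : (ξ * (|x s| ^ q + (0:ℝ) ^ q) + μ) * |x s| ≤ (ξ * (B ^ q + 1) + μ) * B := by
      apply mul_le_mul _ hxsB (abs_nonneg _) (by positivity)
      nlinarith
    have h3 : |f (x s)| ≤ |f (x s) - f 0| + |f 0| := by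
      calc |f (x s)| = |f (x s) - f 0 + f 0| := by ring_nf
        _ ≤ |f (x s) - f 0| + |f 0| := abs_add_le _ _
    rw [hM₁def]
    linarith
  have hgb : ∀ s, 0 ≤ s → |g s| ≤ M := by
    intro s hs
    have h1 : |g s| ≤ |f (x s)| + |κ (x (piD δ s))| := abs_add_le _ _
    have h2 := hκbd (x (piD δ s))
    have h3 := hfb s hs
    rw [hMdef]; linarith
  -- continuity of x on [0, r] given integrability
  have hcontIcc : ∀ r, 0 ≤ r → IntervalIntegrable g volume 0 r →
      ContinuousOn x (Set.Icc 0 r) := by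
    intro r hr hir
    have hIcc : IntegrableOn g (Set.uIcc 0 r) volume := by
      rw [Set.uIcc_of_le hr]
      exact (intervalIntegrable_iff_integrableOn_Icc_of_le hr).mp hir
    have hcontF : ContinuousOn (fun v => x₀ + ∫ s in (0:ℝ)..v, g s) (Set.Icc 0 r) := by
      have h3 := intervalIntegral.continuousOn_primitive_interval hIcc
      rw [Set.uIcc_of_le hr] at h3
      exact continuousOn_const.add h3
    exact hcontF.congr (fun s hs => hx s hs.1)
  -- continuity of f
  have hfc : Continuous f := by
    rw [continuous_iff_continuousAt]
    intro b
    apply continuousAt_of_locally_lipschitz one_pos (ξ * ((|b| + 1) ^ q + |b| ^ q) + μ)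
    intro y hy
    rw [Real.dist_eq, Real.dist_eq]
    have h1 := hfLip y b
    have h2 : |y| ≤ |b| + 1 := by
      have := abs_sub_abs_le_abs_sub y b
      rw [Real.dist_eq] at hy
      linarith
    have h3 : |y| ^ q ≤ (|b| + 1) ^ q := pow_le_pow_left₀ (abs_nonneg _) h2 q
    have h4 : (ξ * (|y| ^ q + |b| ^ q) + μ) ≤ ξ * ((|b| + 1) ^ q + |b| ^ q) + μ := by nlinarith
    calc |f y - f b| ≤ (ξ * (|y| ^ q + |b| ^ q) + μ) * |y - b| := h1
      _ ≤ (ξ * ((|b| + 1) ^ q + |b| ^ q) + μ) * |y - b| :=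
        mul_le_mul_of_nonneg_right h4 (abs_nonneg _)
  -- the κ part is measurable and interval-integrable everywhere
  have hκmeas : Measurable (fun s => κ (x (piD δ s))) := by
    have heq : (fun s => κ (x (piD δ s)))
        = (fun i : ℤ => κ (x (δ * i))) ∘ (fun s : ℝ => ⌊s / δ⌋) := by
      funext s; simp [piD]
    rw [heq]
    exact (measurable_of_countable _).comp (Int.measurable_floor.comp (measurable_id.div_const δ))
  have hκint : ∀ a b : ℝ, IntervalIntegrable (fun s => κ (x (piD δ s))) volume a b := by
    intro a b
    apply IntervalIntegrable.mono_fun' (g := fun _ => γ) (intervalIntegrable_const (c := γ))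
      hκmeas.aestronglyMeasurable
    exact Filter.Eventually.of_forall (fun s => by simpa [Real.norm_eq_abs] using hκbd (x (piD δ s)))
  -- global integrability
  have hAll : ∀ r, 0 ≤ r → IntervalIntegrable g volume 0 r := by
    by_contra hno
    push_neg at hno
    obtain ⟨r₀, hr₀, hr₀I⟩ := hno
    set Cb : Set ℝ := {r : ℝ | 0 ≤ r ∧ ¬ IntervalIntegrable g volume 0 r} with hCb
    have hCne : Cb.Nonempty := ⟨r₀, hr₀, hr₀I⟩
    have hCbdd : BddBelow Cb := ⟨0, fun r hr => hr.1⟩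
    set T := sInf Cb with hT
    have hT0 : 0 ≤ T := le_csInf hCne (fun r hr => hr.1)
    have hbefore : ∀ s, 0 ≤ s → s < T → IntervalIntegrable g volume 0 s := by
      intro s hs hsT
      by_contra h
      exact absurd (csInf_le hCbdd ⟨hs, h⟩) (not_le.mpr hsT)
    have hafter : ∀ s, T < s → ¬ IntervalIntegrable g volume 0 s := by
      intro s hTs hI
      obtain ⟨c, hcC, hcs⟩ := exists_lt_of_csInf_lt hCne hTs
      apply hcC.2
      apply hI.mono_set
      rw [Set.uIcc_of_le hcC.1, Set.uIcc_of_le (le_trans hcC.1 hcs.le)]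
      exact Set.Icc_subset_Icc le_rfl hcs.le
    have hxconst : ∀ s, T < s → x s = x₀ := by
      intro s h
      rw [hx s (le_trans hT0 h.le), intervalIntegral.integral_undef (hafter s h), add_zero]
    -- continuity on Ioo 0 T
    have hcxIoo : ContinuousOn x (Set.Ioo 0 T) := by
      intro s hs
      have hs' : s < (s + T) / 2 := by linarith [hs.2]
      have h2T : (s + T) / 2 < T := by linarith [hs.1]
      have hmid0 : (0:ℝ) ≤ (s + T) / 2 := by linarith [hs.1.le, hs.2.le]
      have hcont2 : ContinuousOn x (Set.Icc 0 ((s + T) / 2)) :=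
        hcontIcc _ hmid0 (hbefore _ hmid0 h2T)
      have hcw : ContinuousWithinAt x (Set.Icc 0 ((s + T) / 2)) s :=
        hcont2 s ⟨hs.1.le, hs'.le⟩
      apply hcw.mono_of_mem_nhdsWithin
      apply mem_nhdsWithin_of_mem_nhds
      exact Filter.mem_of_superset (Ioo_mem_nhds hs.1 hs') Set.Ioo_subset_Icc_self
    -- f ∘ x is integrable on (0, T]
    have hmf1 : AEStronglyMeasurable (fun s => f (x s)) (volume.restrict (Set.Ioc 0 T)) := by
      have h1 : AEMeasurable x (volume.restrict (Set.Ioo 0 T)) :=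
        hcxIoo.aemeasurable measurableSet_Ioo
      have h2 : AEMeasurable (fun s => f (x s)) (volume.restrict (Set.Ioo 0 T)) :=
        hfc.measurable.comp_aemeasurable h1
      rw [Measure.restrict_congr_set Ioo_ae_eq_Ioc] at h2
      exact h2.aestronglyMeasurable
    have hIfT : IntegrableOn (fun s => f (x s)) (Set.Ioc 0 T) volume := by
      apply Integrable.mono' (g := fun _ => M₁)
        ((integrableOn_const_iff).mpr (Or.inr measure_Ioc_lt_top)) hmf1
      exact ae_restrict_of_forall_mem measurableSet_Ioc
        (fun s hs => by rw [Real.norm_eq_abs]; exact hfb s hs.1.le)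
    have hgT : IntervalIntegrable g volume 0 T := by
      have h5 : IntervalIntegrable (fun s => f (x s)) volume 0 T :=
        (intervalIntegrable_iff_integrableOn_Ioc_of_le hT0).mpr hIfT
      exact h5.add (hκint 0 T)
    have hg2 : IntervalIntegrable g volume T (T + 1) := by
      have hconst : IntervalIntegrable (fun s => f (x s)) volume T (T + 1) := by
        apply (intervalIntegrable_iff_integrableOn_Ioc_of_le (by linarith)).mpr
        apply Integrable.congr (f := fun _ : ℝ => f x₀)
          ((integrableOn_const_iff).mpr (Or.inr measure_Ioc_lt_top))
        exact ae_restrict_of_forall_mem measurableSet_Ioc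
          (fun s hs => (congrArg f (hxconst s hs.1)).symm)
      exact hconst.add (hκint T (T + 1))
    exact (hafter (T + 1) (by linarith)) (hgT.trans hg2)
  -- properties of the sampling map
  have hπ0 : 0 ≤ piD δ t := by
    have h1 : (0:ℤ) ≤ ⌊t / δ⌋ := Int.floor_nonneg.mpr (div_nonneg ht hδ.le)
    have h2 : (0:ℝ) ≤ (⌊t / δ⌋ : ℤ) := by exact_mod_cast h1
    exact mul_nonneg hδ.le h2
  have hπle : piD δ t ≤ t := by
    have h1 : ((⌊t / δ⌋ : ℤ) : ℝ) ≤ t / δ := Int.floor_le _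
    have h2 := mul_le_mul_of_nonneg_left h1 hδ.le
    rw [mul_div_cancel₀ _ (ne_of_gt hδ)] at h2
    exact h2
  have hπgap : t - piD δ t ≤ δ := by
    have h1 : t / δ - 1 < ((⌊t / δ⌋ : ℤ) : ℝ) := Int.sub_one_lt_floor _
    have h2 := mul_lt_mul_of_pos_left h1 hδ
    rw [mul_sub, mul_div_cancel₀ _ (ne_of_gt hδ), mul_one] at h2
    have : piD δ t = δ * ((⌊t / δ⌋ : ℤ) : ℝ) := rfl
    linarith
  -- the increment identity
  have hkey : x (piD δ t) - x t = -(∫ s in (piD δ t)..t, g s) := by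
    rw [hx t ht, hx _ hπ0]
    have h4 := integral_interval_sub_left (a := (0:ℝ)) (b := t) (c := piD δ t)
      (f := g) (μ := volume) (hAll t ht) (hAll _ hπ0)
    rw [← h4]; ring
  have hnorm : |x (piD δ t) - x t| ≤ M * δ := by
    rw [hkey, abs_neg]
    have h5 : ‖∫ s in (piD δ t)..t, g s‖ ≤ M * |t - piD δ t| := by
      apply intervalIntegral.norm_integral_le_of_norm_le_const
      intro s hs
      rw [Set.uIoc_of_le hπle] at hs
      rw [Real.norm_eq_abs]
      exact hgb s (le_trans hπ0 hs.1.le)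
    rw [Real.norm_eq_abs] at h5
    have h6 : |t - piD δ t| = t - piD δ t := abs_of_nonneg (by linarith)
    rw [h6] at h5
    calc |∫ s in (piD δ t)..t, g s| ≤ M * (t - piD δ t) := h5
      _ ≤ M * δ := mul_le_mul_of_nonneg_left hπgap hM.le
  calc |x (piD δ t) - x t| ^ p ≤ (M * δ) ^ p :=
        pow_le_pow_left₀ (abs_nonneg _) hnorm p
    _ = M ^ p * δ ^ p := mul_pow _ _ _
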